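/- Let K ≥ 2 and L ≥ 1, and let the delays l_{ij} for i,j ∈ {1,…,K} (including i = j) be independent uniformly distributed random variables on {0,…,L−1}. For each unordered pair {i,j} of distinct indices, let E_{ij} be the event that l_{ij} = l_{jj} or l_{ji} = l_{ii} (i.e., that the normalized cross-delay l'_{ij} = l_{ij} − l_{jj} is zero or l'_{ji} = l_{ji} − l_{ii} is zero). Then the events E_{ij}, over all K(K−1)/2 unordered pairs, are mutually independent and each has probability 1 − (1 − 1/L)². -/

import Mathlib

open Finset

/-- Auxiliary: reparametrize `f : Fin K × Fin K → Fin L` by subtracting the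
appropriate diagonal entry from each off-diagonal entry, grouping the two
off-diagonal entries of each unordered pair together. -/
def pairEquiv (K L : ℕ) [NeZero L] :
    (Fin K × Fin K → Fin L) ≃
      (({p : Fin K × Fin K // p.1 < p.2} → Fin L × Fin L) × (Fin K → Fin L)) where
  toFun f := (fun p => (f (p.1.1, p.1.2) - f (p.1.2, p.1.2),
                        f (p.1.2, p.1.1) - f (p.1.1, p.1.1)),
              fun i => f (i, i))
  invFun x := fun q =>
    if h : q.1 = q.2 then x.2 q.1
    else if hlt : q.1 < q.2 then (x.1 ⟨q, hlt⟩).1 + x.2 q.2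
    else (x.1 ⟨(q.2, q.1), lt_of_le_of_ne (not_lt.1 hlt) (Ne.symm h)⟩).2 + x.2 q.2
  left_inv f := by
    funext q
    obtain ⟨i, j⟩ := q
    by_cases h : i = j
    · subst h; simp
    · by_cases hlt : i < j
      · simp [h, hlt]
      · simp [h, hlt]
  right_inv x := by
    obtain ⟨h, d⟩ := x
    refine Prod.ext ?_ ?_
    · funext p
      obtain ⟨⟨i, j⟩, hlt⟩ := p
      have h1 : i ≠ j := ne_of_lt hlt
      have h2 : ¬ j < i := not_lt.2 hlt.le
      have h3 : j ≠ i := h1.symm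
      refine Prod.ext ?_ ?_ <;> simp [h1, h3, hlt, h2]
    · funext i; simp

/-- Auxiliary: splitting off a predicate depending only on the first factor. -/
def prodSubtypeFst {A B : Type*} (q : A → Prop) : {x : A × B // q x.1} ≃ {a // q a} × B where
  toFun x := (⟨x.1.1, x.2⟩, x.1.2)
  invFun y := ⟨(y.1.1, y.2), y.1.2⟩
  left_inv _ := rfl
  right_inv _ := rfl

theorem cross_delay_events_independent (K L : ℕ) (hK : 2 ≤ K) (hL : 1 ≤ L)
    (S : Finset {p : Fin K × Fin K // p.1 < p.2}) :
    ((Finset.univ.filter (fun f : Fin K × Fin K → Fin L =>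
          ∀ p ∈ S, f (p.1.1, p.1.2) = f (p.1.2, p.1.2) ∨
            f (p.1.2, p.1.1) = f (p.1.1, p.1.1))).card : ℚ)
        / (Fintype.card (Fin K × Fin K → Fin L) : ℚ)
      = (1 - (1 - 1 / (L : ℚ)) ^ 2) ^ S.card := by
  classical
  haveI : NeZero L := ⟨by omega⟩
  set Q : Fin L × Fin L → Prop := fun x => x.1 = 0 ∨ x.2 = 0 with hQ
  set a : ℕ := (univ.filter Q).card with ha_def
  set N : ℕ := Fintype.card {p : Fin K × Fin K // p.1 < p.2} with hN
  -- count of the "good pair" set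
  have ha : a + (L - 1) * (L - 1) = L * L := by
    have hsplit := Finset.card_filter_add_card_filter_not
      (s := (univ : Finset (Fin L × Fin L))) (p := Q)
    have hcompl : (univ.filter (fun x : Fin L × Fin L => ¬ Q x)).card
        = (L - 1) * (L - 1) := by
      have h1 : (univ.filter (fun x : Fin L × Fin L => ¬ Q x))
          = (univ.filter (fun y : Fin L => y ≠ 0)) ×ˢ (univ.filter (fun y : Fin L => y ≠ 0)) := by
        rw [← Finset.filter_product, Finset.univ_product_univ]
        apply Finset.filter_congr
        intro x _
        simp [hQ, not_or]
      rw [h1, Finset.card_product, Finset.filter_ne', Finset.card_erase_of_mem (mem_univ _),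
        Finset.card_univ, Fintype.card_fin]
    rw [hcompl] at hsplit
    simpa [ha_def, Finset.card_univ] using hsplit
  have hSN : S.card ≤ N := by rw [hN]; simpa using Finset.card_le_univ S
  -- the count of the event set
  have hcount : (univ.filter (fun f : Fin K × Fin K → Fin L =>
        ∀ p ∈ S, f (p.1.1, p.1.2) = f (p.1.2, p.1.2) ∨
          f (p.1.2, p.1.1) = f (p.1.1, p.1.1))).card
      = a ^ S.card * (L * L) ^ (N - S.card) * L ^ K := by
    rw [← Fintype.card_subtype]
    have e1 : {f : Fin K × Fin K → Fin L //
          ∀ p ∈ S, f (p.1.1, p.1.2) = f (p.1.2, p.1.2) ∨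
            f (p.1.2, p.1.1) = f (p.1.1, p.1.1)}
        ≃ (∀ p : {p : Fin K × Fin K // p.1 < p.2},
            {x : Fin L × Fin L // p ∈ S → Q x}) × (Fin K → Fin L) := by
      refine ((pairEquiv K L).subtypeEquiv ?_).trans
        ((prodSubtypeFst (fun h => ∀ p ∈ S, Q (h p))).trans
          (Equiv.prodCongr (Equiv.subtypePiEquivPi (p := fun p x => p ∈ S → Q x)) (Equiv.refl _)))
      intro f
      constructor
      · intro hf p hp
        rcases hf p hp with h | h
        · exact Or.inl (by simp [pairEquiv, sub_eq_zero, h])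
        · exact Or.inr (by simp [pairEquiv, sub_eq_zero, h])
      · intro hf p hp
        rcases hf p hp with h | h
        · exact Or.inl (by simpa [pairEquiv, sub_eq_zero] using h)
        · exact Or.inr (by simpa [pairEquiv, sub_eq_zero] using h)
    rw [Fintype.card_congr e1]
    simp only [Fintype.card_prod, Fintype.card_pi, Fintype.card_fun, Fintype.card_fin,
      Finset.prod_const, Finset.card_univ]
    congr 1
    have hfac : ∀ p : {p : Fin K × Fin K // p.1 < p.2},
        Fintype.card {x : Fin L × Fin L // p ∈ S → Q x}
          = if p ∈ S then a else L * L := by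
      intro p
      by_cases hp : p ∈ S
      · rw [if_pos hp, Fintype.card_subtype, ha_def]
        congr 1
        apply Finset.filter_congr
        intro x _
        simp [hp]
      · rw [if_neg hp, Fintype.card_subtype,
          Finset.filter_true_of_mem (fun x _ h => absurd h hp), Finset.card_univ,
          Fintype.card_prod, Fintype.card_fin]
    calc (∏ p : {p : Fin K × Fin K // p.1 < p.2},
            Fintype.card {x : Fin L × Fin L // p ∈ S → Q x})
        = ∏ p : {p : Fin K × Fin K // p.1 < p.2}, (if p ∈ S then a else L * L) := by
          exact Finset.prod_congr rfl (fun p _ => hfac p)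
      _ = a ^ S.card * (L * L) ^ (N - S.card) := by
          rw [Finset.prod_ite, Finset.prod_const, Finset.prod_const, Finset.filter_univ_mem]
          congr 2
          have := Finset.card_filter_add_card_filter_not
            (s := (univ : Finset {p : Fin K × Fin K // p.1 < p.2}))
            (p := fun p => p ∈ S)
          rw [Finset.filter_univ_mem, Finset.card_univ, ← hN] at this
          omega
  -- the total count
  have htot : Fintype.card (Fin K × Fin K → Fin L) = (L * L) ^ N * L ^ K := by
    rw [Fintype.card_congr (pairEquiv K L)]
    simp only [Fintype.card_prod, Fintype.card_fun, Fintype.card_fin]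
    rfl
  rw [hcount, htot]
  have hL0 : (L : ℚ) ≠ 0 := by positivity
  have haq : (a : ℚ) = (L : ℚ) * L - ((L : ℚ) - 1) * ((L : ℚ) - 1) := by
    have : ((a + (L - 1) * (L - 1) : ℕ) : ℚ) = ((L * L : ℕ) : ℚ) := by rw [ha]
    push_cast [Nat.cast_sub hL] at this
    linarith
  have hbase : (1 : ℚ) - (1 - 1 / (L : ℚ)) ^ 2 = (a : ℚ) / ((L : ℚ) * L) := by
    rw [haq]
    field_simp
  rw [hbase]
  have hmul : ((L : ℚ) * L) ^ N = ((L : ℚ) * L) ^ S.card * ((L : ℚ) * L) ^ (N - S.card) := by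
    rw [← pow_add, Nat.add_sub_cancel' hSN]
  push_cast
  rw [div_pow, hmul]
  have hLL : ((L : ℚ) * L) ≠ 0 := by positivity
  have hLK : ((L : ℚ)) ^ K ≠ 0 := by positivity
  field_simp
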